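/- Let S₁ and S₂ be idempotent commutative semirings (i.e., x·x = x for all x). Then for every congruence Θ on S₁ × S₂ the kernel [(0,0)]Θ is strongly directly decomposable, i.e., [(0,0)]Θ = {a ∈ S₁ | ∃ b c, (a,b) Θ (0,c)} × {e ∈ S₂ | ∃ d f, (d,e) Θ (f,0)}. -/
import Mathlib

theorem stmt_14 {S₁ S₂ : Type*} [NonUnitalCommSemiring S₁] [NonUnitalCommSemiring S₂]
    (hidem₁ : ∀ x : S₁, x * x = x) (hidem₂ : ∀ x : S₂, x * x = x)
    (Θ : RingCon (S₁ × S₂)) :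
    {x : S₁ × S₂ | Θ x (0, 0)} =
      {a : S₁ | ∃ (b c : S₂), Θ (a, b) (0, c)} ×ˢ
        {e : S₂ | ∃ (d f : S₁), Θ (d, e) (f, 0)} := by
  ext ⟨a, e⟩
  simp only [Set.mem_setOf_eq, Set.mem_prod]
  constructor
  · intro h
    exact ⟨⟨e, 0, h⟩, ⟨a, 0, h⟩⟩
  · rintro ⟨⟨b, c, h1⟩, ⟨d, f, h2⟩⟩
    have h1' : Θ (a, 0) (0, 0) := by
      have := Θ.mul h1 (Θ.refl (a, 0))
      simpa [Prod.mk_mul_mk, hidem₁ a] using this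
    have h2' : Θ (0, e) (0, 0) := by
      have := Θ.mul h2 (Θ.refl (0, e))
      simpa [Prod.mk_mul_mk, hidem₂ e] using this
    have := Θ.add h1' h2'
    simpa [Prod.mk_add_mk] using this
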